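/- Let N₊ and N₋ be independent Poisson random variables with means λ₊τ and λ₋τ, where λ₊, λ₋, τ > 0, let δ > 0, and let λ̃₊, λ̃₋ > 0 satisfy the variance-preserving condition λ̃₊ + λ̃₋ = λ₊ + λ₋. Define Z = exp( N₊ log(λ̃₊/λ₊) + N₋ log(λ̃₋/λ₋) ). Then the variance of X = δ(N₊ − N₋) under the measure Q with density Z equals its variance under P: E[ (δ(N₊ − N₋) − δ(λ̃₊ − λ̃₋)τ)² · Z ] = δ²(λ₊ + λ₋)τ. -/

import Mathlib

open MeasureTheory ProbabilityTheory Real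

open scoped Nat ENNReal NNReal

open scoped Nat ENNReal NNReal

lemma vp_hs0 (x : ℝ) : HasSum (fun n : ℕ => x ^ n / n !) (Real.exp x) := by
  rw [Real.exp_eq_exp_ℝ]
  exact NormedSpace.expSeries_div_hasSum_exp x

lemma vp_hs1 (x : ℝ) : HasSum (fun n : ℕ => (n : ℝ) * x ^ n / n !) (x * Real.exp x) := by
  have h : HasSum (fun n : ℕ => ((n + 1 : ℕ) : ℝ) * x ^ (n + 1) / (n + 1)!)
      (x * Real.exp x) := by
    have h1 := (vp_hs0 x).mul_left x
    have hfun : (fun n : ℕ => ((n + 1 : ℕ) : ℝ) * x ^ (n + 1) / (n + 1)!) =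
        (fun n : ℕ => x * (x ^ n / n !)) := by
      funext n
      rw [Nat.factorial_succ]
      push_cast
      have h1 : ((n : ℝ) + 1) ≠ 0 := by positivity
      have h2 : ((n ! : ℝ)) ≠ 0 := by positivity
      field_simp
      ring
    rw [hfun]; exact h1
  have h' := (hasSum_nat_add_iff (f := fun n : ℕ => (n : ℝ) * x ^ n / n !) 1).mp h
  simpa using h'

lemma vp_hs2 (x : ℝ) :
    HasSum (fun n : ℕ => (n : ℝ) ^ 2 * x ^ n / n !) ((x + x ^ 2) * Real.exp x) := by
  have h : HasSum (fun n : ℕ => ((n + 1 : ℕ) : ℝ) ^ 2 * x ^ (n + 1) / (n + 1)!)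
      ((x + x ^ 2) * Real.exp x) := by
    have h1 := ((vp_hs1 x).mul_left x).add ((vp_hs0 x).mul_left x)
    have he : x * (x * Real.exp x) + x * Real.exp x = (x + x ^ 2) * Real.exp x := by ring
    rw [he] at h1
    have hfun : (fun n : ℕ => ((n + 1 : ℕ) : ℝ) ^ 2 * x ^ (n + 1) / (n + 1)!) =
        (fun n : ℕ => x * ((n : ℝ) * x ^ n / n !) + x * (x ^ n / n !)) := by
      funext n
      rw [Nat.factorial_succ]
      push_cast
      have h1 : ((n : ℝ) + 1) ≠ 0 := by positivity
      have h2 : ((n ! : ℝ)) ≠ 0 := by positivity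
      field_simp
      ring
    rw [hfun]; exact h1
  have h' := (hasSum_nat_add_iff (f := fun n : ℕ => (n : ℝ) ^ 2 * x ^ n / n !) 1).mp h
  simpa using h'

lemma vp_pmf_integrable {p : PMF ℕ} {f : ℕ → ℝ}
    (h : Summable fun n => (p n).toReal * |f n|) : Integrable f p.toMeasure := by
  refine ⟨(measurable_from_top (f := f)).aestronglyMeasurable, ?_⟩
  rw [HasFiniteIntegral, lintegral_countable']
  have heq : ∀ n : ℕ, ‖f n‖ₑ * p.toMeasure {n} =
      ENNReal.ofReal ((p n).toReal * |f n|) := by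
    intro n
    rw [PMF.toMeasure_apply_singleton p n (measurableSet_singleton n),
      ENNReal.ofReal_mul ENNReal.toReal_nonneg,
      ENNReal.ofReal_toReal (p.apply_ne_top n),
      ← Real.norm_eq_abs, ofReal_norm, mul_comm]
  simp_rw [heq]
  rw [← ENNReal.ofReal_tsum_of_nonneg (fun n => by positivity) h]
  exact ENNReal.ofReal_lt_top

lemma vp_poisson_integral (r : ℝ≥0) (g : ℕ → ℝ) (hg : ∀ n, 0 ≤ g n) {S : ℝ}
    (h : HasSum (fun n => g n * (r : ℝ) ^ n / n !) S) :
    Integrable g (poissonMeasure r) ∧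
      ∫ n, g n ∂(poissonMeasure r) = Real.exp (-(r : ℝ)) * S := by
  have hpmf : ∀ n : ℕ, ((poissonPMF r) n).toReal = Real.exp (-(r : ℝ)) * (r : ℝ) ^ n / n ! := by
    intro n
    rw [show (poissonPMF r) n = ENNReal.ofReal (poissonPMFReal r n) from (poissonPMFReal_ofReal_eq_poissonPMF r n).symm,
      ENNReal.toReal_ofReal poissonPMFReal_nonneg, poissonPMFReal]
  have hsum : Summable (fun n => Real.exp (-(r : ℝ)) * (g n * (r : ℝ) ^ n / n !)) :=
    h.summable.mul_left _
  have hS : Summable fun n => ((poissonPMF r) n).toReal * |g n| := by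
    refine hsum.congr fun n => ?_
    rw [hpmf n, abs_of_nonneg (hg n)]
    ring
  have hPo : poissonMeasure r = (poissonPMF r).toMeasure :=
    Measure.ext_iff_singleton.mpr fun n => by
      rw [poissonMeasure_singleton, PMF.toMeasure_apply_singleton _ _ (measurableSet_singleton n),
        ← poissonPMFReal_ofReal_eq_poissonPMF, poissonPMFReal]
  have hint : Integrable g (poissonMeasure r) := by rw [hPo]; exact vp_pmf_integrable hS
  refine ⟨hint, ?_⟩
  rw [hPo] at hint ⊢
  rw [PMF.integral_eq_tsum _ g hint]
  calc (∑' n, ((poissonPMF r) n).toReal • g n)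
      = ∑' n, Real.exp (-(r : ℝ)) * (g n * (r : ℝ) ^ n / n !) := by
        refine tsum_congr fun n => ?_
        rw [hpmf n, smul_eq_mul]; ring
    _ = Real.exp (-(r : ℝ)) * S := by rw [tsum_mul_left, h.tsum_eq]

lemma vp_exp_aux (r x : ℝ) : Real.exp (-r) * Real.exp x = Real.exp (x - r) := by
  rw [← Real.exp_add]; congr 1; ring

lemma vp_mom0 (r : ℝ≥0) (a : ℝ) (ha : 0 ≤ a) :
    Integrable (fun n : ℕ => a ^ n) (poissonMeasure r) ∧
      ∫ n : ℕ, a ^ n ∂(poissonMeasure r) = Real.exp (a * r - r) := by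
  have h : HasSum (fun n : ℕ => a ^ n * (r : ℝ) ^ n / n !) (Real.exp (a * r)) := by
    have := vp_hs0 (a * r)
    simpa [mul_pow] using this
  obtain ⟨h1, h2⟩ := vp_poisson_integral r _ (fun n => pow_nonneg ha n) h
  exact ⟨h1, by rw [h2, vp_exp_aux]⟩

lemma vp_mom1 (r : ℝ≥0) (a : ℝ) (ha : 0 ≤ a) :
    Integrable (fun n : ℕ => (n : ℝ) * a ^ n) (poissonMeasure r) ∧
      ∫ n : ℕ, (n : ℝ) * a ^ n ∂(poissonMeasure r) = a * r * Real.exp (a * r - r) := by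
  have h : HasSum (fun n : ℕ => ((n : ℝ) * a ^ n) * (r : ℝ) ^ n / n !)
      (a * (r : ℝ) * Real.exp (a * r)) := by
    have := vp_hs1 (a * r)
    simpa [mul_pow, mul_assoc] using this
  obtain ⟨h1, h2⟩ := vp_poisson_integral r _
    (fun n => mul_nonneg (Nat.cast_nonneg n) (pow_nonneg ha n)) h
  refine ⟨h1, ?_⟩
  rw [h2]
  linear_combination (a * (r : ℝ)) * vp_exp_aux (r : ℝ) (a * r)

lemma vp_mom2 (r : ℝ≥0) (a : ℝ) (ha : 0 ≤ a) :
    Integrable (fun n : ℕ => (n : ℝ) ^ 2 * a ^ n) (poissonMeasure r) ∧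
      ∫ n : ℕ, (n : ℝ) ^ 2 * a ^ n ∂(poissonMeasure r) =
        (a * r + (a * r) ^ 2) * Real.exp (a * r - r) := by
  have h : HasSum (fun n : ℕ => ((n : ℝ) ^ 2 * a ^ n) * (r : ℝ) ^ n / n !)
      ((a * (r : ℝ) + (a * (r : ℝ)) ^ 2) * Real.exp (a * r)) := by
    have := vp_hs2 (a * r)
    simpa [mul_pow, mul_assoc] using this
  obtain ⟨h1, h2⟩ := vp_poisson_integral r _
    (fun n => mul_nonneg (by positivity) (pow_nonneg ha n)) h
  refine ⟨h1, ?_⟩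
  rw [h2]
  linear_combination (a * (r : ℝ) + (a * (r : ℝ)) ^ 2) * vp_exp_aux (r : ℝ) (a * r)

lemma vp_comp (Ω : Type*) [MeasurableSpace Ω] (μ : Measure Ω) (N : Ω → ℕ)
    (hN : Measurable N) (r : ℝ≥0) (hd : Measure.map N μ = poissonMeasure r)
    (f : ℕ → ℝ) (hi : Integrable f (poissonMeasure r)) :
    Integrable (fun ω => f (N ω)) μ ∧
      ∫ ω, f (N ω) ∂μ = ∫ n, f n ∂(poissonMeasure r) := by
  have hm : Measurable f := measurable_from_top
  constructor
  · have := (integrable_map_measure (by rw [hd]; exact hi.aestronglyMeasurable)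
      hN.aemeasurable).mp (by rw [hd]; exact hi)
    exact this
  · rw [← hd, integral_map hN.aemeasurable (by rw [hd]; exact hi.aestronglyMeasurable)]

/-- Variance preservation: if the new intensities satisfy `ltp + ltm = lp + lm`, then under
the measure `Q` with density `Z = exp(N₊ log(ltp/lp) + N₋ log(ltm/lm))` the variance of the
log-return `X = δ(N₊ - N₋)` equals its variance under `P`:
`E[(δ(N₊ - N₋) - δ(ltp - ltm) t)² Z] = δ² (lp + lm) t`. -/
theorem variance_preserving_measure_change
    {Ω : Type*} [MeasurableSpace Ω] (μ : Measure Ω) [IsProbabilityMeasure μ]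
    (lp lm t : ℝ) (hlp : 0 < lp) (hlm : 0 < lm) (ht : 0 < t)
    (d : ℝ) (hd : 0 < d)
    (ltp ltm : ℝ) (hltp : 0 < ltp) (hltm : 0 < ltm)
    (hvar : ltp + ltm = lp + lm)
    (Np Nm : Ω → ℕ) (hNp : Measurable Np) (hNm : Measurable Nm)
    (hNpd : Measure.map Np μ = poissonMeasure ((lp * t).toNNReal))
    (hNmd : Measure.map Nm μ = poissonMeasure ((lm * t).toNNReal))
    (hind : IndepFun Np Nm μ) :
    ∫ ω, (d * ((Np ω : ℝ) - (Nm ω : ℝ)) - d * (ltp - ltm) * t) ^ 2 *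
        Real.exp ((Np ω : ℝ) * Real.log (ltp / lp) + (Nm ω : ℝ) * Real.log (ltm / lm)) ∂μ =
      d ^ 2 * (lp + lm) * t := by
  have ha : (0:ℝ) < ltp / lp := div_pos hltp hlp
  have hb : (0:ℝ) < ltm / lm := div_pos hltm hlm
  set a := ltp / lp with ha_def
  set b := ltm / lm with hb_def
  have hrp : (((lp * t).toNNReal) : ℝ) = lp * t := Real.coe_toNNReal _ (by positivity)
  have hrm : (((lm * t).toNNReal) : ℝ) = lm * t := Real.coe_toNNReal _ (by positivity)
  have harp : a * (((lp * t).toNNReal) : ℝ) = ltp * t := by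
    rw [hrp, ha_def]; field_simp
  have harm : b * (((lm * t).toNNReal) : ℝ) = ltm * t := by
    rw [hrm, hb_def]; field_simp
  obtain ⟨jP0, wP0⟩ := vp_mom0 ((lp * t).toNNReal) a ha.le
  obtain ⟨jP1, wP1⟩ := vp_mom1 ((lp * t).toNNReal) a ha.le
  obtain ⟨jP2, wP2⟩ := vp_mom2 ((lp * t).toNNReal) a ha.le
  obtain ⟨jM0, wM0⟩ := vp_mom0 ((lm * t).toNNReal) b hb.le
  obtain ⟨jM1, wM1⟩ := vp_mom1 ((lm * t).toNNReal) b hb.le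
  obtain ⟨jM2, wM2⟩ := vp_mom2 ((lm * t).toNNReal) b hb.le
  rw [harp, hrp] at wP0 wP1 wP2
  rw [harm, hrm] at wM0 wM1 wM2
  obtain ⟨iP0, eP0⟩ := vp_comp Ω μ Np hNp _ hNpd _ jP0
  obtain ⟨iP1, eP1⟩ := vp_comp Ω μ Np hNp _ hNpd _ jP1
  obtain ⟨iP2, eP2⟩ := vp_comp Ω μ Np hNp _ hNpd _ jP2
  obtain ⟨iM0, eM0⟩ := vp_comp Ω μ Nm hNm _ hNmd _ jM0
  obtain ⟨iM1, eM1⟩ := vp_comp Ω μ Nm hNm _ hNmd _ jM1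
  obtain ⟨iM2, eM2⟩ := vp_comp Ω μ Nm hNm _ hNmd _ jM2
  rw [wP0] at eP0; rw [wP1] at eP1; rw [wP2] at eP2
  rw [wM0] at eM0; rw [wM1] at eM1; rw [wM2] at eM2
  have hcomp : ∀ f g : ℕ → ℝ, IndepFun (fun ω => f (Np ω)) (fun ω => g (Nm ω)) μ :=
    fun f g => hind.comp measurable_from_top measurable_from_top
  have prod : ∀ (f g : ℕ → ℝ), Integrable (fun ω => f (Np ω)) μ →
      Integrable (fun ω => g (Nm ω)) μ →
      Integrable (fun ω => f (Np ω) * g (Nm ω)) μ ∧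
      ∫ ω, f (Np ω) * g (Nm ω) ∂μ = (∫ ω, f (Np ω) ∂μ) * ∫ ω, g (Nm ω) ∂μ :=
    fun f g hf hg => ⟨(hcomp f g).integrable_mul hf hg,
      (hcomp f g).integral_fun_mul_eq_mul_integral hf.aestronglyMeasurable hg.aestronglyMeasurable⟩
  obtain ⟨i20, e20⟩ := prod (fun n => (n : ℝ) ^ 2 * a ^ n) (fun n => b ^ n) iP2 iM0
  obtain ⟨i02, e02⟩ := prod (fun n => a ^ n) (fun n => (n : ℝ) ^ 2 * b ^ n) iP0 iM2
  obtain ⟨i11, e11⟩ := prod (fun n => (n : ℝ) * a ^ n) (fun n => (n : ℝ) * b ^ n) iP1 iM1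
  obtain ⟨i10, e10⟩ := prod (fun n => (n : ℝ) * a ^ n) (fun n => b ^ n) iP1 iM0
  obtain ⟨i01, e01⟩ := prod (fun n => a ^ n) (fun n => (n : ℝ) * b ^ n) iP0 iM1
  obtain ⟨i00, e00⟩ := prod (fun n => a ^ n) (fun n => b ^ n) iP0 iM0
  rw [eP2, eM0] at e20; rw [eP0, eM2] at e02; rw [eP1, eM1] at e11
  rw [eP1, eM0] at e10; rw [eP0, eM1] at e01; rw [eP0, eM0] at e00
  have hpt : (fun ω => (d * ((Np ω : ℝ) - (Nm ω : ℝ)) - d * (ltp - ltm) * t) ^ 2 *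
        Real.exp ((Np ω : ℝ) * Real.log a + (Nm ω : ℝ) * Real.log b)) =
      (fun ω =>
        d ^ 2 * ((Np ω : ℝ) ^ 2 * a ^ Np ω * (b ^ Nm ω)) +
        (d ^ 2 * (a ^ Np ω * ((Nm ω : ℝ) ^ 2 * b ^ Nm ω)) +
        ((-2 * d ^ 2) * ((Np ω : ℝ) * a ^ Np ω * ((Nm ω : ℝ) * b ^ Nm ω)) +
        ((-2 * d * (d * (ltp - ltm) * t)) * ((Np ω : ℝ) * a ^ Np ω * (b ^ Nm ω)) +
        ((2 * d * (d * (ltp - ltm) * t)) * (a ^ Np ω * ((Nm ω : ℝ) * b ^ Nm ω)) +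
        (d * (ltp - ltm) * t) ^ 2 * (a ^ Np ω * (b ^ Nm ω))))))) := by
    funext ω
    rw [Real.exp_add, Real.exp_nat_mul, Real.exp_nat_mul, Real.exp_log ha, Real.exp_log hb]
    ring
  rw [hpt]
  have I1 := i20.const_mul (d ^ 2)
  have I2 := i02.const_mul (d ^ 2)
  have I3 := i11.const_mul (-2 * d ^ 2)
  have I4 := i10.const_mul (-2 * d * (d * (ltp - ltm) * t))
  have I5 := i01.const_mul (2 * d * (d * (ltp - ltm) * t))
  have I6 := i00.const_mul ((d * (ltp - ltm) * t) ^ 2)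
  have s5 : ∫ ω, ((2 * d * (d * (ltp - ltm) * t)) * (a ^ Np ω * ((Nm ω : ℝ) * b ^ Nm ω)) + (d * (ltp - ltm) * t) ^ 2 * (a ^ Np ω * (b ^ Nm ω))) ∂μ = (∫ ω, (2 * d * (d * (ltp - ltm) * t)) * (a ^ Np ω * ((Nm ω : ℝ) * b ^ Nm ω)) ∂μ) + ∫ ω, (d * (ltp - ltm) * t) ^ 2 * (a ^ Np ω * (b ^ Nm ω)) ∂μ :=
    integral_add I5 I6
  have s4 : ∫ ω, ((-2 * d * (d * (ltp - ltm) * t)) * ((Np ω : ℝ) * a ^ Np ω * (b ^ Nm ω)) + ((2 * d * (d * (ltp - ltm) * t)) * (a ^ Np ω * ((Nm ω : ℝ) * b ^ Nm ω)) + (d * (ltp - ltm) * t) ^ 2 * (a ^ Np ω * (b ^ Nm ω)))) ∂μ = (∫ ω, (-2 * d * (d * (ltp - ltm) * t)) * ((Np ω : ℝ) * a ^ Np ω * (b ^ Nm ω)) ∂μ) + ∫ ω, ((2 * d * (d * (ltp - ltm) * t)) * (a ^ Np ω * ((Nm ω : ℝ) * b ^ Nm ω)) + (d * (ltp - ltm)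 * t) ^ 2 * (a ^ Np ω * (b ^ Nm ω))) ∂μ :=
    integral_add I4 (I5.add I6)
  have s3 : ∫ ω, ((-2 * d ^ 2) * ((Np ω : ℝ) * a ^ Np ω * ((Nm ω : ℝ) * b ^ Nm ω)) + ((-2 * d * (d * (ltp - ltm) * t)) * ((Np ω : ℝ) * a ^ Np ω * (b ^ Nm ω)) + ((2 * d * (d * (ltp - ltm) * t)) * (a ^ Np ω * ((Nm ω : ℝ) * b ^ Nm ω)) + (d * (ltp - ltm) * t) ^ 2 * (a ^ Np ω * (b ^ Nm ω))))) ∂μ =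
      (∫ ω, (-2 * d ^ 2) * ((Np ω : ℝ) * a ^ Np ω * ((Nm ω : ℝ) * b ^ Nm ω)) ∂μ) + ∫ ω, ((-2 * d * (d * (ltp - ltm) * t)) * ((Np ω : ℝ) * a ^ Np ω * (b ^ Nm ω)) + ((2 * d * (d * (ltp - ltm) * t)) * (a ^ Np ω * ((Nm ω : ℝ) * b ^ Nm ω)) + (d * (ltp - ltm) * t) ^ 2 * (a ^ Np ω * (b ^ Nm ω)))) ∂μ :=
    integral_add I3 (I4.add (I5.add I6))
  have s2 : ∫ ω, (d ^ 2 * (a ^ Np ω * ((Nm ω : ℝ) ^ 2 * b ^ Nm ω)) + ((-2 * d ^ 2) * ((Np ω : ℝ) * a ^ Np ω * ((Nm ω : ℝ) * b ^ Nm ω)) + ((-2 * d * (d * (ltp - ltm) * t)) * ((Np ω : ℝ) * a ^ Np ω * (b ^ Nm ω)) + ((2 * d * (d * (ltp - ltm) * t)) * (a ^ Np ω * ((Nm ω : ℝ) * b ^ Nm ω)) + (d * (ltp - ltm) * t) ^ 2 * (a ^ Np ω * (b ^ Nm ω)))))) ∂μ =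
      (∫ ω, d ^ 2 * (a ^ Np ω * ((Nm ω : ℝ) ^ 2 * b ^ Nm ω)) ∂μ) + ∫ ω, ((-2 * d ^ 2) * ((Np ω : ℝ) * a ^ Np ω * ((Nm ω : ℝ) * b ^ Nm ω)) + ((-2 * d * (d * (ltp - ltm) * t)) * ((Np ω : ℝ) * a ^ Np ω * (b ^ Nm ω)) + ((2 * d * (d * (ltp - ltm) * t)) * (a ^ Np ω * ((Nm ω : ℝ) * b ^ Nm ω)) + (d * (ltp - ltm) * t) ^ 2 * (a ^ Np ω * (b ^ Nm ω))))) ∂μ :=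
    integral_add I2 (I3.add (I4.add (I5.add I6)))
  have s1 : ∫ ω, (d ^ 2 * ((Np ω : ℝ) ^ 2 * a ^ Np ω * (b ^ Nm ω)) + (d ^ 2 * (a ^ Np ω * ((Nm ω : ℝ) ^ 2 * b ^ Nm ω)) + ((-2 * d ^ 2) * ((Np ω : ℝ) * a ^ Np ω * ((Nm ω : ℝ) * b ^ Nm ω)) + ((-2 * d * (d * (ltp - ltm) * t)) * ((Np ω : ℝ) * a ^ Np ω * (b ^ Nm ω)) + ((2 * d * (d * (ltp - ltm) * t)) * (a ^ Np ω * ((Nm ω : ℝ) * b ^ Nm ω)) + (d * (ltp - ltm) * t) ^ 2 * (a ^ Np ω * (b ^ Nm ω))))))) ∂μ =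
      (∫ ω, d ^ 2 * ((Np ω : ℝ) ^ 2 * a ^ Np ω * (b ^ Nm ω)) ∂μ) + ∫ ω, (d ^ 2 * (a ^ Np ω * ((Nm ω : ℝ) ^ 2 * b ^ Nm ω)) + ((-2 * d ^ 2) * ((Np ω : ℝ) * a ^ Np ω * ((Nm ω : ℝ) * b ^ Nm ω)) + ((-2 * d * (d * (ltp - ltm) * t)) * ((Np ω : ℝ) * a ^ Np ω * (b ^ Nm ω)) + ((2 * d * (d * (ltp - ltm) * t)) * (a ^ Np ω * ((Nm ω : ℝ) * b ^ Nm ω)) + (d * (ltp - ltm) * t) ^ 2 * (a ^ Np ω * (b ^ Nm ω)))))) ∂μ :=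
    integral_add I1 (I2.add (I3.add (I4.add (I5.add I6))))
  rw [s1, s2, s3, s4, s5, integral_const_mul _ _, integral_const_mul _ _, integral_const_mul _ _, integral_const_mul _ _,
    integral_const_mul _ _, integral_const_mul _ _]
  have v20 : ∫ ω, (Np ω : ℝ) ^ 2 * a ^ Np ω * (b ^ Nm ω) ∂μ =
      ((ltp * t + (ltp * t) ^ 2) * Real.exp (ltp * t - lp * t)) *
        Real.exp (ltm * t - lm * t) := e20
  have v02 : ∫ ω, a ^ Np ω * ((Nm ω : ℝ) ^ 2 * b ^ Nm ω) ∂μ =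
      Real.exp (ltp * t - lp * t) *
        ((ltm * t + (ltm * t) ^ 2) * Real.exp (ltm * t - lm * t)) := e02
  have v11 : ∫ ω, (Np ω : ℝ) * a ^ Np ω * ((Nm ω : ℝ) * b ^ Nm ω) ∂μ =
      (ltp * t * Real.exp (ltp * t - lp * t)) *
        (ltm * t * Real.exp (ltm * t - lm * t)) := e11
  have v10 : ∫ ω, (Np ω : ℝ) * a ^ Np ω * (b ^ Nm ω) ∂μ =
      (ltp * t * Real.exp (ltp * t - lp * t)) * Real.exp (ltm * t - lm * t) := e10
  have v01 : ∫ ω, a ^ Np ω * ((Nm ω : ℝ) * b ^ Nm ω) ∂μ =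
      Real.exp (ltp * t - lp * t) * (ltm * t * Real.exp (ltm * t - lm * t)) := e01
  have v00 : ∫ ω, a ^ Np ω * (b ^ Nm ω) ∂μ =
      Real.exp (ltp * t - lp * t) * Real.exp (ltm * t - lm * t) := e00
  rw [v20, v02, v11, v10, v01, v00]
  have hAB : Real.exp (ltp * t - lp * t) * Real.exp (ltm * t - lm * t) = 1 := by
    rw [← Real.exp_add,
      show (ltp * t - lp * t) + (ltm * t - lm * t) = (ltp + ltm - (lp + lm)) * t by ring,
      hvar]
    simp
  linear_combination (d ^ 2 * (ltp + ltm) * t) * hAB + (d ^ 2 * t) * hvar
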